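/- arXiv:1706.00821 — 2 statements merged into one kernel-verified Lean document; each statement's English description precedes it below -/
import Mathlib

section
/- Let X₁, X₂, Y be Banach spaces, let r ≥ 1 and p₁, p₂, q₁, q₂, s₁, s₂ ∈ [1,∞) with q₁ ≥ p₁, q₂ ≥ p₂, and 1/r − 1/p₁ − 1/p₂ + 1/q₁ + 1/q₂ > 0. Define 1/s₂ = 1/r − 1/p₂ + 1/q₂ and 1/s₁ = 1/r − 1/p₁ − 1/p₂ + 1/q₁ + 1/q₂. If a bilinear operator T : X₁ × X₂ → Y is multiple (r; p₁,p₂)-summing with constant C, then for all finite families (x¹_i) ⊂ X₁, (x²_j) ⊂ X₂, (∑_i (∑_j ‖T(x¹_i, x²_j)‖^{s₂})^{s₁/s₂})^{1/s₁} ≤ C · ‖(x¹_i)‖_{w,q₁} · ‖(x²_j)‖_{w,q₂}. -/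
open scoped BigOperators

/-- The weak ℓ^p norm of a finite family in a normed space:
`sup_{φ ∈ B_{X'}} (∑ j |φ(x_j)|^p)^(1/p)`. -/
noncomputable def weakNorm {X : Type*} [NormedAddCommGroup X] [NormedSpace ℝ X]
    {n : ℕ} (x : Fin n → X) (p : ℝ) : ℝ :=
  ⨆ φ : {φ : X →L[ℝ] ℝ // ‖φ‖ ≤ 1}, (∑ j, |φ.1 (x j)| ^ p) ^ (1 / p)

section helpers
open Finset

variable {X : Type*} [NormedAddCommGroup X] [NormedSpace ℝ X] {n : ℕ}

instance : Nonempty {φ : X →L[ℝ] ℝ // ‖φ‖ ≤ 1} := ⟨⟨0, by simp⟩⟩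

lemma weakNorm_nonneg (x : Fin n → X) (p : ℝ) : 0 ≤ weakNorm x p :=
  Real.iSup_nonneg fun φ => Real.rpow_nonneg
    (sum_nonneg fun j _ => Real.rpow_nonneg (abs_nonneg _) _) _

lemma weakNorm_bdd (x : Fin n → X) {p : ℝ} (hp : 0 ≤ p) :
    BddAbove (Set.range fun φ : {φ : X →L[ℝ] ℝ // ‖φ‖ ≤ 1} =>
      (∑ j, |φ.1 (x j)| ^ p) ^ (1 / p)) := by
  refine ⟨(∑ j, ‖x j‖ ^ p) ^ (1 / p), ?_⟩
  rintro _ ⟨φ, rfl⟩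
  refine Real.rpow_le_rpow (sum_nonneg fun j _ => Real.rpow_nonneg (abs_nonneg _) _)
    (sum_le_sum fun j _ => Real.rpow_le_rpow (abs_nonneg _) ?_ hp) (by positivity)
  calc |φ.1 (x j)| = ‖φ.1 (x j)‖ := rfl
    _ ≤ ‖φ.1‖ * ‖x j‖ := φ.1.le_opNorm _
    _ ≤ 1 * ‖x j‖ := by gcongr; exact φ.2
    _ = ‖x j‖ := one_mul _

lemma le_weakNorm (x : Fin n → X) {p : ℝ} (hp : 0 ≤ p) (φ : {φ : X →L[ℝ] ℝ // ‖φ‖ ≤ 1}) :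
    (∑ j, |φ.1 (x j)| ^ p) ^ (1 / p) ≤ weakNorm x p :=
  le_ciSup (weakNorm_bdd x hp) φ

lemma weakNorm_le (x : Fin n → X) (p : ℝ) {M : ℝ}
    (h : ∀ φ : {φ : X →L[ℝ] ℝ // ‖φ‖ ≤ 1}, (∑ j, |φ.1 (x j)| ^ p) ^ (1 / p) ≤ M) :
    weakNorm x p ≤ M :=
  ciSup_le h

end helpers

open Finset in
lemma sum_rpow_mono {n : ℕ} (a : Fin n → ℝ) (ha : ∀ i, 0 ≤ a i) {p q : ℝ}
    (hq : 0 < q) (hpq : q ≤ p) :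
    (∑ i, a i ^ p) ^ (1 / p) ≤ (∑ i, a i ^ q) ^ (1 / q) := by
  have hp : 0 < p := lt_of_lt_of_le hq hpq
  set S : ℝ := (∑ i, a i ^ q) ^ (1 / q) with hSdef
  have hsq : 0 ≤ ∑ i, a i ^ q := sum_nonneg fun i _ => Real.rpow_nonneg (ha i) q
  have hSnn : 0 ≤ S := Real.rpow_nonneg hsq _
  have hle : ∀ i, a i ≤ S := by
    intro i
    have h1 : a i ^ q ≤ ∑ i, a i ^ q :=
      single_le_sum (fun i _ => Real.rpow_nonneg (ha i) q) (mem_univ i)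
    have h2 := Real.rpow_le_rpow (Real.rpow_nonneg (ha i) q) h1 (le_of_lt (one_div_pos.mpr hq))
    rwa [← Real.rpow_mul (ha i), mul_one_div, div_self hq.ne', Real.rpow_one] at h2
  have hSq : S ^ q = ∑ i, a i ^ q := by
    rw [hSdef, ← Real.rpow_mul hsq, one_div, inv_mul_cancel₀ hq.ne', Real.rpow_one]
  have key : ∀ i, a i ^ p ≤ S ^ (p - q) * a i ^ q := by
    intro i
    have h2 : a i ^ (p - q) ≤ S ^ (p - q) := Real.rpow_le_rpow (ha i) (hle i) (by linarith)
    have h3 : a i ^ p = a i ^ (p - q) * a i ^ q := by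
      rw [← Real.rpow_add' (ha i) (by simpa using hp.ne')]
      ring_nf
    rw [h3]
    exact mul_le_mul_of_nonneg_right h2 (Real.rpow_nonneg (ha i) q)
  have hsum : ∑ i, a i ^ p ≤ S ^ p := by
    calc ∑ i, a i ^ p ≤ ∑ i, S ^ (p - q) * a i ^ q := sum_le_sum fun i _ => key i
      _ = S ^ (p - q) * ∑ i, a i ^ q := by rw [mul_sum]
      _ = S ^ (p - q) * S ^ q := by rw [hSq]
      _ = S ^ p := by rw [← Real.rpow_add' hSnn (by simpa using hp.ne')]; ring_nf
  calc (∑ i, a i ^ p) ^ (1 / p)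
      ≤ (S ^ p) ^ (1 / p) := Real.rpow_le_rpow
        (sum_nonneg fun i _ => Real.rpow_nonneg (ha i) p) hsum (by positivity)
    _ = S := by rw [← Real.rpow_mul hSnn, mul_one_div, div_self hp.ne', Real.rpow_one]

section aux
open Finset
variable {X : Type*} [NormedAddCommGroup X] [NormedSpace ℝ X] {n : ℕ}

lemma weakNorm_smul_le (y : Fin n → X) (lam : Fin n → ℝ) (hlam : ∀ j, 0 ≤ lam j)
    {p q c : ℝ} (hp : 1 ≤ p) (hpq : p < q) (hc : 1 / c = 1 / p - 1 / q) :
    weakNorm (fun j => lam j • y j) p ≤ (∑ j, lam j ^ c) ^ (1 / c) * weakNorm y q := by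
  have hp0 : 0 < p := by linarith
  have hq0 : 0 < q := by linarith
  have hcpos : 0 < 1 / c := by
    rw [hc]; have := one_div_lt_one_div_of_lt hp0 hpq; linarith
  have hc0 : 0 < c := one_div_pos.mp hcpos
  have hpc : p < c := by
    have h1 : 1 / c < 1 / p := by
      rw [hc]; have := one_div_pos.mpr hq0; linarith
    exact lt_of_one_div_lt_one_div hc0 h1
  have hca : 1 < c / p := (one_lt_div hp0).mpr hpc
  have h1cq : 1 / c + 1 / q = 1 / p := by linarith
  have conj : Real.HolderConjugate (c / p) (q / p) := by
    refine Real.holderConjugate_iff.mpr ⟨hca, ?_⟩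
    rw [inv_div, inv_div]
    calc p / c + p / q = p * (1 / c + 1 / q) := by ring
      _ = p * (1 / p) := by rw [h1cq]
      _ = 1 := by field_simp
  apply weakNorm_le
  intro φ
  have hterm : ∀ j, |φ.1 (lam j • y j)| = lam j * |φ.1 (y j)| := by
    intro j
    rw [map_smul, smul_eq_mul, abs_mul, abs_of_nonneg (hlam j)]
  have hsum1 : ∑ j, |φ.1 (lam j • y j)| ^ p = ∑ j, lam j ^ p * |φ.1 (y j)| ^ p := by
    refine Finset.sum_congr rfl fun j _ => ?_
    rw [hterm j, Real.mul_rpow (hlam j) (abs_nonneg _)]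
  have holder : ∑ j, lam j ^ p * |φ.1 (y j)| ^ p ≤
      (∑ j, lam j ^ c) ^ (p / c) * (∑ j, |φ.1 (y j)| ^ q) ^ (p / q) := by
    have h := Real.inner_le_Lp_mul_Lq_of_nonneg (univ : Finset (Fin n)) conj
      (f := fun j => lam j ^ p) (g := fun j => |φ.1 (y j)| ^ p)
      (fun j _ => Real.rpow_nonneg (hlam j) p) (fun j _ => Real.rpow_nonneg (abs_nonneg _) p)
    have e1 : ∀ j, (lam j ^ p) ^ (c / p) = lam j ^ c := by
      intro j; rw [← Real.rpow_mul (hlam j)]; congr 1; field_simp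
    have e2 : ∀ j, (|φ.1 (y j)| ^ p) ^ (q / p) = |φ.1 (y j)| ^ q := by
      intro j; rw [← Real.rpow_mul (abs_nonneg _)]; congr 1; field_simp
    simp only [e1, e2, one_div_div] at h
    exact h
  have hlamsum : 0 ≤ ∑ j, lam j ^ c := sum_nonneg fun j _ => Real.rpow_nonneg (hlam j) c
  have hphisum : 0 ≤ ∑ j, |φ.1 (y j)| ^ q := sum_nonneg fun j _ => Real.rpow_nonneg (abs_nonneg _) q
  calc (∑ j, |φ.1 (lam j • y j)| ^ p) ^ (1 / p)
      ≤ ((∑ j, lam j ^ c) ^ (p / c) * (∑ j, |φ.1 (y j)| ^ q) ^ (p / q)) ^ (1 / p) := by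
        rw [hsum1]
        exact Real.rpow_le_rpow
          (sum_nonneg fun j _ => mul_nonneg (Real.rpow_nonneg (hlam j) p)
            (Real.rpow_nonneg (abs_nonneg _) p)) holder (by positivity)
    _ = (∑ j, lam j ^ c) ^ (1 / c) * (∑ j, |φ.1 (y j)| ^ q) ^ (1 / q) := by
        rw [Real.mul_rpow (Real.rpow_nonneg hlamsum _) (Real.rpow_nonneg hphisum _),
          ← Real.rpow_mul hlamsum, ← Real.rpow_mul hphisum]
        congr 1 <;> [skip; skip] <;> congr 1
        · field_simp
        · field_simp
    _ ≤ (∑ j, lam j ^ c) ^ (1 / c) * weakNorm y q := by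
        exact mul_le_mul_of_nonneg_left (le_weakNorm y hq0.le φ)
          (Real.rpow_nonneg hlamsum _)

lemma step_upgrade (y : Fin n → X) (b : Fin n → ℝ) (hb : ∀ j, 0 ≤ b j)
    (K : ℝ) (hK : 0 ≤ K) {r p q s : ℝ} (hr : 0 < r) (hp : 1 ≤ p) (hpq : p ≤ q)
    (hs : 1 / s = 1 / r - 1 / p + 1 / q) (hspos : 0 < 1 / s)
    (H : ∀ lam : Fin n → ℝ, (∀ j, 0 ≤ lam j) →
      (∑ j, lam j ^ r * b j ^ r) ^ (1 / r) ≤ K * weakNorm (fun j => lam j • y j) p) :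
    (∑ j, b j ^ s) ^ (1 / s) ≤ K * weakNorm y q := by
  have hs0 : 0 < s := one_div_pos.mp hspos
  rcases eq_or_lt_of_le hpq with heq | hlt
  · subst heq
    have h1 : 1 / s = 1 / r := by rw [hs]; ring
    have hsr : s = r := by
      field_simp at h1; linarith
    have h := H (fun _ => 1) (fun _ => zero_le_one)
    simp only [Real.one_rpow, one_mul, one_smul] at h
    rw [hsr]
    exact h
  · set c : ℝ := (1 / p - 1 / q)⁻¹ with hcdef
    have hc : 1 / c = 1 / p - 1 / q := by rw [hcdef, one_div, inv_inv]
    have hp0 : 0 < p := by linarith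
    have hq0 : 0 < q := by linarith
    have hcpos : 0 < 1 / c := by
      rw [hc]; have := one_div_lt_one_div_of_lt hp0 hlt; linarith
    have hc0 : 0 < c := one_div_pos.mp hcpos
    have hrs : 1 / s = 1 / r - 1 / c := by rw [hc, hs]; ring
    set S : ℝ := ∑ j, b j ^ s with hSdef
    have hSnn : 0 ≤ S := sum_nonneg fun j _ => Real.rpow_nonneg (hb j) s
    rcases eq_or_lt_of_le hSnn with hS0 | hSpos
    · rw [← hS0, Real.zero_rpow hspos.ne']
      exact mul_nonneg hK (weakNorm_nonneg y q)
    · set lam : Fin n → ℝ := fun j => b j ^ (s / c) with hlamdef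
      have hlamnn : ∀ j, 0 ≤ lam j := fun j => Real.rpow_nonneg (hb j) _
      have hexp : s / c * r + r = s := by
        have h4 : 1 / c = 1 / r - 1 / s := by linarith
        rw [div_eq_mul_one_div s c, h4]
        field_simp
        ring
      have hkey : ∀ j, lam j ^ r * b j ^ r = b j ^ s := by
        intro j
        rw [hlamdef]
        rw [← Real.rpow_mul (hb j), ← Real.rpow_add' (hb j) (by rw [hexp]; exact hs0.ne')]
        rw [hexp]
      have hlamc : ∑ j, lam j ^ c = S := by
        refine sum_congr rfl fun j _ => ?_
        rw [hlamdef, ← Real.rpow_mul (hb j), div_mul_cancel₀ _ hc0.ne']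
      have chain : S ^ (1 / s) * S ^ (1 / c) ≤ (K * weakNorm y q) * S ^ (1 / c) := by
        calc S ^ (1 / s) * S ^ (1 / c)
            = S ^ (1 / r) := by
              rw [← Real.rpow_add hSpos]; congr 1; linarith
          _ = (∑ j, lam j ^ r * b j ^ r) ^ (1 / r) := by
              congr 1
              rw [hSdef]
              exact (sum_congr rfl fun j _ => hkey j).symm
          _ ≤ K * weakNorm (fun j => lam j • y j) p := H lam hlamnn
          _ ≤ K * ((∑ j, lam j ^ c) ^ (1 / c) * weakNorm y q) :=
              mul_le_mul_of_nonneg_left (weakNorm_smul_le y lam hlamnn hp hlt hc) hK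
          _ = (K * weakNorm y q) * S ^ (1 / c) := by rw [hlamc]; ring
      exact le_of_mul_le_mul_right chain (Real.rpow_pos_of_pos hSpos (1 / c))

end aux

open Finset in
/-- **Anisotropic inclusion theorem, bilinear case.** -/
theorem bilinear_anisotropic_inclusion
    {X₁ X₂ Y : Type*} [NormedAddCommGroup X₁] [NormedSpace ℝ X₁] [CompleteSpace X₁]
    [NormedAddCommGroup X₂] [NormedSpace ℝ X₂] [CompleteSpace X₂]
    [NormedAddCommGroup Y] [NormedSpace ℝ Y] [CompleteSpace Y]
    (T : X₁ →L[ℝ] X₂ →L[ℝ] Y)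
    (r p₁ p₂ q₁ q₂ s₁ s₂ : ℝ) (hr : 1 ≤ r)
    (hp₁ : 1 ≤ p₁) (hp₂ : 1 ≤ p₂) (hq₁ : p₁ ≤ q₁) (hq₂ : p₂ ≤ q₂)
    (hpos : 0 < 1 / r - 1 / p₁ - 1 / p₂ + 1 / q₁ + 1 / q₂)
    (hs₂ : 1 / s₂ = 1 / r - 1 / p₂ + 1 / q₂)
    (hs₁ : 1 / s₁ = 1 / r - 1 / p₁ - 1 / p₂ + 1 / q₁ + 1 / q₂)
    (C : ℝ) (hC : 0 ≤ C)
    (hT : ∀ (n₁ n₂ : ℕ) (x1 : Fin n₁ → X₁) (x2 : Fin n₂ → X₂),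
      (∑ i, ∑ j, ‖T (x1 i) (x2 j)‖ ^ r) ^ (1 / r) ≤
        C * weakNorm x1 p₁ * weakNorm x2 p₂) :
    ∀ (n₁ n₂ : ℕ) (x1 : Fin n₁ → X₁) (x2 : Fin n₂ → X₂),
      (∑ i, (∑ j, ‖T (x1 i) (x2 j)‖ ^ s₂) ^ (s₁ / s₂)) ^ (1 / s₁) ≤
        C * weakNorm x1 q₁ * weakNorm x2 q₂ := by
  intro n₁ n₂ x1 x2
  have hr0 : 0 < r := by linarith
  have hp₁0 : 0 < p₁ := by linarith
  have hp₂0 : 0 < p₂ := by linarith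
  have hq₁0 : 0 < q₁ := by linarith
  have hq₂0 : 0 < q₂ := by linarith
  have hq₁inv : 1 / q₁ ≤ 1 / p₁ := one_div_le_one_div_of_le hp₁0 hq₁
  have hq₂inv : 1 / q₂ ≤ 1 / p₂ := one_div_le_one_div_of_le hp₂0 hq₂
  have hs₁pos : 0 < 1 / s₁ := by rw [hs₁]; exact hpos
  have hs₂pos : 0 < 1 / s₂ := by rw [hs₂]; linarith
  have hs₁0 : 0 < s₁ := one_div_pos.mp hs₁pos
  have hs₂0 : 0 < s₂ := one_div_pos.mp hs₂pos
  have hrs₂ : r ≤ s₂ := by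
    have h1 : 1 / s₂ ≤ 1 / r := by rw [hs₂]; linarith
    exact le_of_one_div_le_one_div hs₂0 h1
  -- Step 1: upgrade the second variable
  have step1 : ∀ x1' : Fin n₁ → X₁,
      (∑ j, ((∑ i, ‖T (x1' i) (x2 j)‖ ^ r) ^ (1 / r)) ^ s₂) ^ (1 / s₂) ≤
        (C * weakNorm x1' p₁) * weakNorm x2 q₂ := by
    intro x1'
    refine step_upgrade x2 (fun j => (∑ i, ‖T (x1' i) (x2 j)‖ ^ r) ^ (1 / r))
      (fun j => Real.rpow_nonneg
        (sum_nonneg fun i _ => Real.rpow_nonneg (norm_nonneg _) r) _)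
      (C * weakNorm x1' p₁) (mul_nonneg hC (weakNorm_nonneg _ _)) hr0 hp₂ hq₂ hs₂ hs₂pos ?_
    intro lam hlam
    have h := hT n₁ n₂ x1' (fun j => lam j • x2 j)
    have hnorm : ∀ i j, ‖T (x1' i) (lam j • x2 j)‖ = lam j * ‖T (x1' i) (x2 j)‖ := by
      intro i j
      rw [map_smul, norm_smul, Real.norm_eq_abs, abs_of_nonneg (hlam j)]
    calc (∑ j, lam j ^ r * ((∑ i, ‖T (x1' i) (x2 j)‖ ^ r) ^ (1 / r)) ^ r) ^ (1 / r)
        = (∑ i, ∑ j, ‖T (x1' i) ((fun j => lam j • x2 j) j)‖ ^ r) ^ (1 / r) := by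
          rw [Finset.sum_comm]
          congr 1
          refine sum_congr rfl fun j _ => ?_
          rw [← Real.rpow_mul (sum_nonneg fun i _ => Real.rpow_nonneg (norm_nonneg _) r),
            one_div_mul_cancel hr0.ne', Real.rpow_one, Finset.mul_sum]
          refine sum_congr rfl fun i _ => ?_
          rw [hnorm i j, Real.mul_rpow (hlam j) (norm_nonneg _)]
      _ ≤ C * weakNorm x1' p₁ * weakNorm (fun j => lam j • x2 j) p₂ := h
      _ = (C * weakNorm x1' p₁) * weakNorm (fun j => lam j • x2 j) p₂ := by ring
  -- Step 2: upgrade the first variable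
  have hs₁' : 1 / s₁ = 1 / s₂ - 1 / p₁ + 1 / q₁ := by rw [hs₁, hs₂]; ring
  have step2 :
      (∑ i, ((∑ j, ‖T (x1 i) (x2 j)‖ ^ s₂) ^ (1 / s₂)) ^ s₁) ^ (1 / s₁) ≤
        (C * weakNorm x2 q₂) * weakNorm x1 q₁ := by
    refine step_upgrade x1 (fun i => (∑ j, ‖T (x1 i) (x2 j)‖ ^ s₂) ^ (1 / s₂))
      (fun i => Real.rpow_nonneg
        (sum_nonneg fun j _ => Real.rpow_nonneg (norm_nonneg _) s₂) _)
      (C * weakNorm x2 q₂) (mul_nonneg hC (weakNorm_nonneg _ _)) hs₂0 hp₁ hq₁ hs₁' hs₁pos ?_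
    intro lam hlam
    have hnorm : ∀ i j, ‖T (lam i • x1 i) (x2 j)‖ = lam i * ‖T (x1 i) (x2 j)‖ := by
      intro i j
      rw [map_smul, ContinuousLinearMap.smul_apply, norm_smul, Real.norm_eq_abs,
        abs_of_nonneg (hlam i)]
    calc (∑ i, lam i ^ s₂ * ((∑ j, ‖T (x1 i) (x2 j)‖ ^ s₂) ^ (1 / s₂)) ^ s₂) ^ (1 / s₂)
        = (∑ j, ∑ i, ‖T (lam i • x1 i) (x2 j)‖ ^ s₂) ^ (1 / s₂) := by
          rw [Finset.sum_comm]
          congr 1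
          refine sum_congr rfl fun i _ => ?_
          rw [← Real.rpow_mul (sum_nonneg fun j _ => Real.rpow_nonneg (norm_nonneg _) s₂),
            one_div_mul_cancel hs₂0.ne', Real.rpow_one, Finset.mul_sum]
          refine sum_congr rfl fun j _ => ?_
          rw [hnorm i j, Real.mul_rpow (hlam i) (norm_nonneg _)]
      _ ≤ (∑ j, ((∑ i, ‖T (lam i • x1 i) (x2 j)‖ ^ r) ^ (1 / r)) ^ s₂) ^ (1 / s₂) := by
          refine Real.rpow_le_rpow
            (sum_nonneg fun j _ => sum_nonneg fun i _ => Real.rpow_nonneg (norm_nonneg _) s₂)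
            (sum_le_sum fun j _ => ?_) (le_of_lt hs₂pos)
          have h1 := sum_rpow_mono (fun i => ‖T (lam i • x1 i) (x2 j)‖)
            (fun i => norm_nonneg _) hr0 hrs₂
          have h2 := Real.rpow_le_rpow
            (Real.rpow_nonneg
              (sum_nonneg fun i _ => Real.rpow_nonneg (norm_nonneg _) s₂) _) h1 hs₂0.le
          rwa [← Real.rpow_mul
            (sum_nonneg fun i _ => Real.rpow_nonneg (norm_nonneg _) s₂),
            one_div_mul_cancel hs₂0.ne', Real.rpow_one] at h2
      _ ≤ (C * weakNorm (fun i => lam i • x1 i) p₁) * weakNorm x2 q₂ :=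
          step1 (fun i => lam i • x1 i)
      _ = (C * weakNorm x2 q₂) * weakNorm (fun i => lam i • x1 i) p₁ := by ring
  calc (∑ i, (∑ j, ‖T (x1 i) (x2 j)‖ ^ s₂) ^ (s₁ / s₂)) ^ (1 / s₁)
      = (∑ i, ((∑ j, ‖T (x1 i) (x2 j)‖ ^ s₂) ^ (1 / s₂)) ^ s₁) ^ (1 / s₁) := by
        congr 1
        refine sum_congr rfl fun i _ => ?_
        rw [← Real.rpow_mul (sum_nonneg fun j _ => Real.rpow_nonneg (norm_nonneg _) s₂)]
        congr 1
        field_simp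
    _ ≤ (C * weakNorm x2 q₂) * weakNorm x1 q₁ := step2
    _ = C * weakNorm x1 q₁ * weakNorm x2 q₂ := by ring
end

section
/- Suppose every bounded bilinear form B : c₀ × c₀ → 𝕂 satisfies the Littlewood 4/3 inequality (∑_{i,j} |B(e_i,e_j)|^{4/3})^{3/4} ≤ √2 ‖B‖. Then, via the anisotropic inclusion with r = 4/3, p = (1,1), q = (q₁,q₂) with q₁,q₂ ≥ 1 and 3/4 − 2 + 1/q₁ + 1/q₂ > 0, every such bilinear form satisfies (∑_i (∑_j |B(e_i,e_j)|^{s₂})^{s₁/s₂})^{1/s₁} ≤ √2 ‖B‖ with 1/s₂ = 3/4 − 1 + 1/q₂ and 1/s₁ = 3/4 − 2 + 1/q₁ + 1/q₂. -/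
open scoped BigOperators ZeroAtInfty

/-- The canonical unit vectors of `c₀`. -/
noncomputable def c0unit (i : ℕ) : C₀(ℕ, ℝ) :=
  ⟨⟨Pi.single i 1, continuous_of_discreteTopology⟩, by
    rw [cocompact_eq_atTop (α := ℕ)]
    refine Filter.Tendsto.congr' ?_ tendsto_const_nhds
    filter_upwards [Filter.eventually_gt_atTop i] with n hn
    simp [Pi.single_apply, hn.ne']⟩

/-- Coordinate projection onto a finite set, as a continuous linear map on `c₀`. -/
noncomputable def projC0 (S : Finset ℕ) : C₀(ℕ, ℝ) →L[ℝ] C₀(ℕ, ℝ) :=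
  LinearMap.mkContinuous
    { toFun := fun f =>
        ⟨⟨fun n => if n ∈ S then f n else 0, continuous_of_discreteTopology⟩, by
          rw [cocompact_eq_atTop (α := ℕ)]
          refine Filter.Tendsto.congr' ?_ tendsto_const_nhds
          filter_upwards [Filter.eventually_gt_atTop (S.sup id)] with n hn
          have : n ∉ S := fun h => absurd (Finset.le_sup (f := id) h) (not_le.2 hn)
          simp [this]⟩
      map_add' := fun f g => by
        ext n
        simp only [ZeroAtInftyContinuousMap.coe_mk, ContinuousMap.coe_mk,
          ZeroAtInftyContinuousMap.coe_add, Pi.add_apply]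
        split <;> simp
      map_smul' := fun c f => by
        ext n
        simp only [ZeroAtInftyContinuousMap.coe_mk, ContinuousMap.coe_mk,
          ZeroAtInftyContinuousMap.coe_smul, Pi.smul_apply, RingHom.id_apply, smul_eq_mul]
        split <;> simp }
    1
    (fun f => by
      rw [one_mul, ← ZeroAtInftyContinuousMap.norm_toBCF_eq_norm,
        ← ZeroAtInftyContinuousMap.norm_toBCF_eq_norm]
      refine BoundedContinuousFunction.norm_le (norm_nonneg _) |>.2 fun n => ?_
      have := BoundedContinuousFunction.norm_coe_le_norm f.toBCF n
      simp only [ZeroAtInftyContinuousMap.toBCF_apply] at this ⊢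
      simp only [LinearMap.coe_mk, AddHom.coe_mk, ZeroAtInftyContinuousMap.coe_mk,
        ContinuousMap.coe_mk]
      split
      · exact this
      · simpa using (norm_nonneg _).trans this)

theorem projC0_norm_le (S : Finset ℕ) : ‖projC0 S‖ ≤ 1 :=
  LinearMap.mkContinuous_norm_le _ zero_le_one _

theorem projC0_c0unit (S : Finset ℕ) (i : ℕ) :
    projC0 S (c0unit i) = if i ∈ S then c0unit i else 0 := by
  ext n
  by_cases hi : i ∈ S
  · by_cases hn : n ∈ S <;>
      simp [projC0, c0unit, LinearMap.mkContinuous_apply, Pi.single_apply, hi, hn] <;>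
      aesop
  · simp only [projC0, LinearMap.mkContinuous_apply, LinearMap.coe_mk, AddHom.coe_mk, hi,
      if_false]
    by_cases hn : n ∈ S <;>
      simp [c0unit, Pi.single_apply, hn] <;> aesop

/-- ℓ^p ⊆ ℓ^q inclusion for nonnegative sequences, `0 < p ≤ q`. -/
theorem ell_incl {f : ℕ → ℝ} (hf : ∀ n, 0 ≤ f n) {p q : ℝ} (hp : 0 < p) (hpq : p ≤ q)
    (hs : Summable fun n => f n ^ p) :
    (Summable fun n => f n ^ q) ∧ (∑' n, f n ^ q) ≤ (∑' n, f n ^ p) ^ (q / p) := by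
  set S := ∑' n, f n ^ p with hS
  have hS0 : 0 ≤ S := tsum_nonneg fun n => Real.rpow_nonneg (hf n) p
  have hle : ∀ n, f n ≤ S ^ (1 / p) := by
    intro n
    have h1 : f n ^ p ≤ S := Summable.le_tsum hs n fun m _ => Real.rpow_nonneg (hf m) p
    have := Real.rpow_le_rpow (Real.rpow_nonneg (hf n) p) h1 (by positivity : (0:ℝ) ≤ 1 / p)
    rwa [← Real.rpow_mul (hf n), mul_one_div, div_self hp.ne', Real.rpow_one] at this
  have hbound : ∀ n, f n ^ q ≤ f n ^ p * S ^ ((q - p) / p) := by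
    intro n
    have : f n ^ q = f n ^ p * f n ^ (q - p) := by
      rw [← Real.rpow_add' (hf n) (by linarith)]
      ring_nf
    rw [this]
    refine mul_le_mul_of_nonneg_left ?_ (Real.rpow_nonneg (hf n) p)
    calc f n ^ (q - p) ≤ (S ^ (1 / p)) ^ (q - p) :=
          Real.rpow_le_rpow (hf n) (hle n) (by linarith)
      _ = S ^ ((q - p) / p) := by
          rw [← Real.rpow_mul hS0, one_div, inv_mul_eq_div]
  have hsq : Summable fun n => f n ^ q :=
    Summable.of_nonneg_of_le (fun n => Real.rpow_nonneg (hf n) q) hbound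
      (hs.mul_right _)
  refine ⟨hsq, ?_⟩
  calc (∑' n, f n ^ q) ≤ ∑' n, f n ^ p * S ^ ((q - p) / p) :=
        Summable.tsum_le_tsum hbound hsq (hs.mul_right _)
    _ = S * S ^ ((q - p) / p) := by rw [tsum_mul_right]
    _ = S ^ (q / p) := by
        have hqp : 1 + (q - p) / p = q / p := by field_simp; ring
        have hne : 1 + (q - p) / p ≠ 0 := by
          rw [hqp]; exact (div_pos (lt_of_lt_of_le hp hpq) hp).ne'
        rw [← hqp, Real.rpow_one_add' hS0 hne]

/-- **From Littlewood's 4/3 inequality to the anisotropic bilinear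
Hardy–Littlewood estimate.** If every bounded bilinear form on `c₀ × c₀`
satisfies `(∑_{i,j}|B(e_i,e_j)|^{4/3})^{3/4} ≤ √2‖B‖`, then for `q₁, q₂ ≥ 1`
with `3/4 − 2 + 1/q₁ + 1/q₂ > 0` and `1/s₂ = 3/4 − 1 + 1/q₂`,
`1/s₁ = 3/4 − 2 + 1/q₁ + 1/q₂`, every such form satisfies
`(∑_i (∑_j |B(e_i,e_j)|^{s₂})^{s₁/s₂})^{1/s₁} ≤ √2‖B‖`. -/
theorem littlewood_to_anisotropic
    (hLittlewood : ∀ B : ContinuousMultilinearMap ℝ (fun _ : Fin 2 => C₀(ℕ, ℝ)) ℝ,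
      (∑' i : ℕ, ∑' j : ℕ, |B ![c0unit i, c0unit j]| ^ ((4 : ℝ) / 3)) ^ ((3 : ℝ) / 4) ≤
        Real.sqrt 2 * ‖B‖)
    (q₁ q₂ s₁ s₂ : ℝ) (hq₁ : 1 ≤ q₁) (hq₂ : 1 ≤ q₂)
    (hpos : 0 < 3 / 4 - 2 + 1 / q₁ + 1 / q₂)
    (hs₂ : 1 / s₂ = 3 / 4 - 1 + 1 / q₂)
    (hs₁ : 1 / s₁ = 3 / 4 - 2 + 1 / q₁ + 1 / q₂) :
    ∀ B : ContinuousMultilinearMap ℝ (fun _ : Fin 2 => C₀(ℕ, ℝ)) ℝ,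
      (∑' i : ℕ, (∑' j : ℕ, |B ![c0unit i, c0unit j]| ^ s₂) ^ (s₁ / s₂)) ^ (1 / s₁) ≤
        Real.sqrt 2 * ‖B‖ := by
  intro B
  -- exponent arithmetic
  have hq₁0 : (0:ℝ) < q₁ := lt_of_lt_of_le one_pos hq₁
  have hq₂0 : (0:ℝ) < q₂ := lt_of_lt_of_le one_pos hq₂
  have h1q₁ : 1 / q₁ ≤ 1 := by rw [div_le_one hq₁0]; exact hq₁
  have h1q₂ : 1 / q₂ ≤ 1 := by rw [div_le_one hq₂0]; exact hq₂
  have h1q₁0 : 0 < 1 / q₁ := by positivity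
  have h1q₂0 : 0 < 1 / q₂ := by positivity
  have hs₁pos : 0 < 1 / s₁ := by rw [hs₁]; exact hpos
  have hs₂pos : 0 < 1 / s₂ := by rw [hs₂]; linarith
  have hs1 : 0 < s₁ := one_div_pos.mp hs₁pos
  have hs2 : 0 < s₂ := one_div_pos.mp hs₂pos
  have h43s₂ : (4:ℝ)/3 ≤ s₂ := by
    have h : 1 / s₂ ≤ 1 / ((4:ℝ)/3) := by rw [hs₂, one_div_div]; linarith
    exact ((one_div_le_one_div hs2 (by norm_num)).mp h)
  have h43s₁ : (4:ℝ)/3 ≤ s₁ := le_trans h43s₂ (by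
    have h : 1 / s₁ ≤ 1 / s₂ := by rw [hs₁, hs₂]; linarith
    exact ((one_div_le_one_div hs1 hs2).mp h))
  have hs₂s₁ : s₂ ≤ s₁ := by
    have h : 1 / s₁ ≤ 1 / s₂ := by rw [hs₁, hs₂]; linarith
    exact ((one_div_le_one_div hs1 hs2).mp h)
  set a : ℕ → ℕ → ℝ := fun i j => |B ![c0unit i, c0unit j]| with ha
  have han : ∀ i j, 0 ≤ a i j := fun i j => abs_nonneg _
  have hC0 : 0 ≤ Real.sqrt 2 * ‖B‖ := mul_nonneg (Real.sqrt_nonneg 2) (norm_nonneg B)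
  set C : ℝ := (Real.sqrt 2 * ‖B‖) ^ ((4:ℝ)/3) with hCdef
  have hCnn : 0 ≤ C := Real.rpow_nonneg hC0 _
  -- Step 1: uniform rectangle bound from Littlewood applied to truncations
  have key : ∀ S T : Finset ℕ, ∑ i ∈ S, ∑ j ∈ T, a i j ^ ((4:ℝ)/3) ≤ C := by
    intro S T
    set B' := B.compContinuousLinearMap ![projC0 S, projC0 T] with hB'
    have hB'norm : ‖B'‖ ≤ ‖B‖ := by
      refine le_trans (ContinuousMultilinearMap.norm_compContinuousLinearMap_le B _) ?_
      have hprod : ∏ i : Fin 2, ‖(![projC0 S, projC0 T] : Fin 2 → _) i‖ ≤ 1 := by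
        rw [Fin.prod_univ_two]
        simp only [Matrix.cons_val_zero, Matrix.cons_val_one, Matrix.head_cons]
        exact mul_le_one₀ (projC0_norm_le S) (norm_nonneg (projC0 T)) (projC0_norm_le T)
      calc ‖B‖ * _ ≤ ‖B‖ * 1 := mul_le_mul_of_nonneg_left hprod (norm_nonneg B)
        _ = ‖B‖ := mul_one _
    have hB'entry : ∀ i j, B' ![c0unit i, c0unit j] =
        if i ∈ S ∧ j ∈ T then B ![c0unit i, c0unit j] else 0 := by
      intro i j
      have harg : (fun k => (![projC0 S, projC0 T] : Fin 2 → _) k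
            ((![c0unit i, c0unit j] : Fin 2 → _) k)) =
          ![projC0 S (c0unit i), projC0 T (c0unit j)] := by
        funext k; fin_cases k <;> rfl
      rw [hB', ContinuousMultilinearMap.compContinuousLinearMap_apply, harg,
        projC0_c0unit, projC0_c0unit]
      by_cases hi : i ∈ S
      · by_cases hj : j ∈ T
        · simp [hi, hj]
        · simp only [hi, hj, if_true, if_false, and_false]
          exact B.map_coord_zero 1 (by simp)
      · simp only [hi, if_false, false_and]
        exact B.map_coord_zero 0 (by simp)
    have hLit := hLittlewood B'
    have hentry43 : ∀ i j, |B' ![c0unit i, c0unit j]| ^ ((4:ℝ)/3) =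
        if i ∈ S ∧ j ∈ T then a i j ^ ((4:ℝ)/3) else 0 := by
      intro i j
      rw [hB'entry]
      split
      · rfl
      · rw [abs_zero, Real.zero_rpow (by norm_num)]
    have hinner : ∀ i, (∑' j : ℕ, |B' ![c0unit i, c0unit j]| ^ ((4:ℝ)/3)) =
        ∑ j ∈ T, if i ∈ S ∧ j ∈ T then a i j ^ ((4:ℝ)/3) else 0 := by
      intro i
      rw [tsum_eq_sum (s := T)]
      · exact Finset.sum_congr rfl fun j _ => hentry43 i j
      · intro j hj
        rw [hentry43]
        simp [hj]
    have houter : (∑' i : ℕ, ∑' j : ℕ, |B' ![c0unit i, c0unit j]| ^ ((4:ℝ)/3)) =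
        ∑ i ∈ S, ∑ j ∈ T, a i j ^ ((4:ℝ)/3) := by
      rw [tsum_eq_sum (s := S)]
      · refine Finset.sum_congr rfl fun i hi => ?_
        rw [hinner]
        exact Finset.sum_congr rfl fun j hj => by simp [hi, hj]
      · intro i hi
        rw [hinner]
        refine Finset.sum_eq_zero fun j _ => by simp [hi]
    rw [houter] at hLit
    have hsum_nn : 0 ≤ ∑ i ∈ S, ∑ j ∈ T, a i j ^ ((4:ℝ)/3) := by
      refine Finset.sum_nonneg fun i _ => Finset.sum_nonneg fun j _ =>
        Real.rpow_nonneg (han i j) _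
    have h2 : ((∑ i ∈ S, ∑ j ∈ T, a i j ^ ((4:ℝ)/3)) ^ ((3:ℝ)/4)) ^ ((4:ℝ)/3) ≤
        (Real.sqrt 2 * ‖B‖) ^ ((4:ℝ)/3) := by
      refine Real.rpow_le_rpow (Real.rpow_nonneg hsum_nn _) ?_ (by norm_num)
      exact le_trans hLit (by
        refine mul_le_mul_of_nonneg_left hB'norm (Real.sqrt_nonneg 2))
    rwa [← Real.rpow_mul hsum_nn, (by norm_num : (3:ℝ)/4 * (4/3) = 1),
      Real.rpow_one] at h2
  -- Step 2: summability of the 4/3 family on ℕ × ℕ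
  set F : ℕ × ℕ → ℝ := fun p => a p.1 p.2 ^ ((4:ℝ)/3) with hF
  have hFnn : ∀ p, 0 ≤ F p := fun p => Real.rpow_nonneg (han _ _) _
  have hrect : ∀ u : Finset (ℕ × ℕ), ∑ p ∈ u, F p ≤ C := by
    intro u
    calc ∑ p ∈ u, F p ≤ ∑ p ∈ (u.image Prod.fst) ×ˢ (u.image Prod.snd), F p := by
          refine Finset.sum_le_sum_of_subset_of_nonneg ?_ fun p _ _ => hFnn p
          intro p hp
          exact Finset.mem_product.2
            ⟨Finset.mem_image_of_mem _ hp, Finset.mem_image_of_mem _ hp⟩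
      _ = ∑ i ∈ u.image Prod.fst, ∑ j ∈ u.image Prod.snd, a i j ^ ((4:ℝ)/3) := by
          rw [Finset.sum_product]
      _ ≤ C := key _ _
  have hFsum : Summable F := summable_of_sum_le hFnn hrect
  have hFle : ∑' p, F p ≤ C := Summable.tsum_le_of_sum_le hFsum hrect
  -- Step 3: ℓ^p-inclusion chain
  set g : ℕ → ℕ → ℝ := fun i j => a i j ^ ((4:ℝ)/3) with hg
  have hgi : ∀ i, Summable (g i) := fun i => hFsum.prod_factor i
  set G : ℕ → ℝ := fun i => ∑' j, g i j with hG
  have hGnn : ∀ i, 0 ≤ G i := fun i => tsum_nonneg fun j => Real.rpow_nonneg (han i j) _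
  have hGsum : Summable G := hFsum.prod
  have hGle : ∑' i, G i ≤ C := by
    rw [hG]
    calc (∑' i, ∑' j, g i j) = ∑' p, F p := (Summable.tsum_prod hFsum).symm
      _ ≤ C := hFle
  have hexp43 : (0:ℝ) < 4/3 := by norm_num
  -- inner inclusion, per row
  have hinner_le : ∀ i, (∑' j, a i j ^ s₂) ^ (s₁ / s₂) ≤ (G i ^ ((3:ℝ)/4)) ^ s₁ := by
    intro i
    obtain ⟨hsum₂, hle₂⟩ := ell_incl (han i) hexp43 h43s₂ (hgi i)
    have h1 : (∑' j, a i j ^ s₂) ^ (s₁ / s₂) ≤ (G i ^ (s₂ / (4/3))) ^ (s₁ / s₂) := by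
      refine Real.rpow_le_rpow (tsum_nonneg fun j => Real.rpow_nonneg (han i j) _)
        hle₂ (by positivity)
    refine le_trans h1 (le_of_eq ?_)
    rw [← Real.rpow_mul (hGnn i), ← Real.rpow_mul (hGnn i)]
    congr 1
    field_simp
  -- outer inclusion
  set H : ℕ → ℝ := fun i => G i ^ ((3:ℝ)/4) with hH
  have hHnn : ∀ i, 0 ≤ H i := fun i => Real.rpow_nonneg (hGnn i) _
  have hH43 : ∀ i, H i ^ ((4:ℝ)/3) = G i := by
    intro i
    rw [hH, ← Real.rpow_mul (hGnn i)]
    norm_num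
  have hHsum : Summable fun i => H i ^ ((4:ℝ)/3) := by
    simpa only [hH43] using hGsum
  obtain ⟨hsum₁, hle₁⟩ := ell_incl hHnn hexp43 h43s₁ hHsum
  have houter_le : (∑' i, H i ^ s₁) ≤ C ^ (s₁ / (4/3)) := by
    refine le_trans hle₁ ?_
    refine Real.rpow_le_rpow (tsum_nonneg fun i => Real.rpow_nonneg (hHnn i) _) ?_
      (by positivity)
    calc (∑' i, H i ^ ((4:ℝ)/3)) = ∑' i, G i := by simp only [hH43]
      _ ≤ C := hGle
  -- combine
  have hmain : (∑' i, (∑' j, a i j ^ s₂) ^ (s₁ / s₂)) ≤ C ^ (s₁ / (4/3)) := by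
    refine le_trans ?_ houter_le
    refine Summable.tsum_le_tsum hinner_le ?_ hsum₁
    exact Summable.of_nonneg_of_le
      (fun i => Real.rpow_nonneg (tsum_nonneg fun j => Real.rpow_nonneg (han i j) _) _)
      hinner_le hsum₁
  have hfinal : ((∑' i, (∑' j, a i j ^ s₂) ^ (s₁ / s₂)) ^ (1 / s₁)) ≤
      (C ^ (s₁ / (4/3))) ^ (1 / s₁) := by
    refine Real.rpow_le_rpow ?_ hmain (le_of_lt hs₁pos)
    exact tsum_nonneg fun i =>
      Real.rpow_nonneg (tsum_nonneg fun j => Real.rpow_nonneg (han i j) _) _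
  calc (∑' i, (∑' j, a i j ^ s₂) ^ (s₁ / s₂)) ^ (1 / s₁) ≤
        (C ^ (s₁ / (4/3))) ^ (1 / s₁) := hfinal
    _ = Real.sqrt 2 * ‖B‖ := by
        rw [hCdef, ← Real.rpow_mul hC0, ← Real.rpow_mul hC0]
        rw [show (4:ℝ)/3 * (s₁ / (4/3)) * (1/s₁) = 1 by field_simp]
        exact Real.rpow_one _
end
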